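/- Let τ > 0, k₁, k₂ ∈ ℝ and r > 0 be such that every complex root w of the polynomial w² + 2k₁·w + (k₂ − 1) satisfies |w| ≤ r. Then every s ∈ ℂ satisfying e^{2sτ} + 2k₁·e^{sτ} + (k₂ − 1) = 0 has Re(s) ≤ (ln r)/τ; in particular, if r < 1 then Re(s) < 0. -/

import Mathlib

theorem stmt_13 (τ k₁ k₂ r : ℝ) (hτ : 0 < τ) (hr : 0 < r)
    (hroots : ∀ w : ℂ, w ^ 2 + 2 * (k₁ : ℂ) * w + ((k₂ : ℂ) - 1) = 0 → ‖w‖ ≤ r) :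
    ∀ s : ℂ,
      Complex.exp (2 * s * (τ : ℂ)) + 2 * (k₁ : ℂ) * Complex.exp (s * (τ : ℂ)) +
        ((k₂ : ℂ) - 1) = 0 →
      s.re ≤ Real.log r / τ ∧ (r < 1 → s.re < 0) := by
  intro s hs
  have hw : ‖Complex.exp (s * (τ : ℂ))‖ ≤ r := by
    apply hroots
    rw [← Complex.exp_nat_mul]
    calc Complex.exp (2 * (s * τ)) + 2 * (k₁ : ℂ) * Complex.exp (s * τ) + ((k₂ : ℂ) - 1)
        = Complex.exp (2 * s * τ) + 2 * (k₁ : ℂ) * Complex.exp (s * τ) + ((k₂ : ℂ) - 1) := by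
          ring_nf
      _ = 0 := hs
  rw [Complex.norm_exp] at hw
  have hre : (s * (τ : ℂ)).re = s.re * τ := by simp
  rw [hre] at hw
  have h1 : s.re * τ ≤ Real.log r := (Real.le_log_iff_exp_le hr).mpr hw
  have h2 : s.re ≤ Real.log r / τ := (le_div_iff₀ hτ).mpr h1
  refine ⟨h2, fun hr1 => ?_⟩
  have : Real.log r < 0 := Real.log_neg hr hr1
  calc s.re ≤ Real.log r / τ := h2
    _ < 0 := div_neg_of_neg_of_pos this hτ
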